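/- Every co-interval graph is 12-representable: if G is a graph on n vertices whose complement is an interval graph, then there is a labeling of the vertices of G by {1,…,n} and a word that 12-represents the labeled graph. -/

import Mathlib

/-- A word has no 12-match iff no two consecutive letters form a strictly
increasing pair, i.e. the word is weakly decreasing at each step. -/
def NoMatch12 (w : List ℕ) : Prop := w.Chain' (fun a b => b ≤ a)

/-- `w` 12-represents the labeled graph with vertex set `V ⊂ ℕ` and edge relation
`E`: every vertex occurs in `w`, all letters of `w` are vertices, and for all
distinct vertices `x, y`: `xy` is an edge iff the subsequence of `w` consisting of
occurrences of `x` and `y` has no 12-match. -/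
def Rep12 (V : Finset ℕ) (E : ℕ → ℕ → Prop) (w : List ℕ) : Prop :=
  (∀ v ∈ V, v ∈ w) ∧ (∀ a ∈ w, a ∈ V) ∧
    ∀ x ∈ V, ∀ y ∈ V, x ≠ y →
      (E x y ↔ NoMatch12 (w.filter (fun a => a = x ∨ a = y)))

namespace Stmt15Aux

/-- A weakly decreasing word over a two-letter alphabet `{a,b}` with `a < b` is
exactly a word avoiding the pattern `a` before `b`. -/
lemma chain_iff_no_ab {a b : ℕ} (hab : a < b) (l : List ℕ)
    (hl : ∀ c ∈ l, c = a ∨ c = b) :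
    List.Chain' (fun p q : ℕ => q ≤ p) l ↔ ¬ [a, b].Sublist l := by
  haveI : IsTrans ℕ (fun p q : ℕ => q ≤ p) := ⟨fun _ _ _ h1 h2 => le_trans h2 h1⟩
  rw [List.Chain', List.isChain_iff_pairwise, List.pairwise_iff_forall_sublist]
  constructor
  · intro h hs
    have := h hs
    omega
  · intro h x y hs
    have hx := hl x (hs.subset (by simp))
    have hy := hl y (hs.subset (by simp))
    rcases hx with rfl | rfl <;> rcases hy with rfl | rfl
    · exact le_refl _
    · exact absurd hs h
    · exact le_of_lt hab
    · exact le_refl _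

/-- In a list sorted by a key, any two members with strictly increasing keys
occur in order as a sublist. -/
lemma pair_sublist_of_sorted {α β : Type*} [LinearOrder β] {key : α → β}
    {l : List α} (hs : l.Pairwise (fun p q => key p ≤ key q))
    {x y : α} (hx : x ∈ l) (hy : y ∈ l) (hxy : key x < key y) : [x, y].Sublist l := by
  induction l with
  | nil => simp at hx
  | cons c t ih =>
    rw [List.pairwise_cons] at hs
    rcases List.mem_cons.mp hx with rfl | hx'
    · have hy' : y ∈ t := by
        rcases List.mem_cons.mp hy with rfl | h
        · exact absurd hxy (lt_irrefl _)
        · exact h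
      exact (List.singleton_sublist.mpr hy').cons₂ x
    · rcases List.mem_cons.mp hy with rfl | hy'
      · exact absurd (hs.1 x hx') (not_le.mpr hxy)
      · exact (ih hs.2 hx' hy').cons c

variable {n : ℕ}

/-- Key for the vertex labeling: decreasing in the left endpoint,
ties broken by index. -/
noncomputable def key2 (L : Fin n → ℝ) (i : Fin n) : ℝ ×ₗ ℕ := toLex (-L i, (i : ℕ))

lemma key2_inj {L : Fin n → ℝ} {i j : Fin n} (h : key2 L i = key2 L j) : i = j := by
  have h2 : ((i : ℕ)) = (j : ℕ) := congrArg (fun p : ℝ ×ₗ ℕ => (ofLex p).2) h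
  exact Fin.val_injective h2

/-- The label of vertex `i`: one plus the number of vertices with smaller key. -/
noncomputable def lab (L : Fin n → ℝ) (i : Fin n) : ℕ :=
  (Finset.univ.filter fun j => key2 L j < key2 L i).card + 1

lemma lab_lt {L : Fin n → ℝ} {i j : Fin n} (h : key2 L i < key2 L j) :
    lab L i < lab L j := by
  have hsub : (Finset.univ.filter fun k => key2 L k < key2 L i) ⊆
      (Finset.univ.filter fun k => key2 L k < key2 L j) := by
    intro k hk
    simp only [Finset.mem_filter, Finset.mem_univ, true_and] at hk ⊢
    exact hk.trans h
  have hss : (Finset.univ.filter fun k => key2 L k < key2 L i) ⊂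
      (Finset.univ.filter fun k => key2 L k < key2 L j) :=
    (Finset.ssubset_iff_of_subset hsub).mpr ⟨i, by simp [h], by simp⟩
  have := Finset.card_lt_card hss
  simp only [lab]
  omega

lemma lab_inj (L : Fin n → ℝ) : Function.Injective (lab L) := by
  intro i j h
  rcases lt_trichotomy (key2 L i) (key2 L j) with h1 | h1 | h1
  · exact absurd h (Nat.ne_of_lt (lab_lt h1))
  · exact key2_inj h1
  · exact absurd h.symm (Nat.ne_of_lt (lab_lt h1))

lemma lab_mem (L : Fin n → ℝ) (i : Fin n) : lab L i ∈ Finset.Icc 1 n := by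
  have hss : (Finset.univ.filter fun k => key2 L k < key2 L i) ⊂ Finset.univ :=
    (Finset.ssubset_iff_of_subset (Finset.subset_univ _)).mpr
      ⟨i, Finset.mem_univ _, by simp⟩
  have := Finset.card_lt_card hss
  simp only [Finset.card_univ, Fintype.card_fin] at this
  simp only [Finset.mem_Icc, lab]
  omega

/-- Key for the endpoint events: the endpoint value, with left endpoints
before right endpoints in case of ties. -/
noncomputable def ekey (L R : Fin n → ℝ) (e : Fin n × Bool) : ℝ ×ₗ ℕ :=
  toLex (if e.2 then R e.1 else L e.1, if e.2 then 1 else 0)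

/-- The sorted list of endpoint events. -/
noncomputable def es (L R : Fin n → ℝ) : List (Fin n × Bool) :=
  List.insertionSort (fun e1 e2 => ekey L R e1 ≤ ekey L R e2)
    ((List.finRange n).flatMap fun i => [(i, false), (i, true)])

lemma es_sorted (L R : Fin n → ℝ) :
    (es L R).Pairwise (fun e1 e2 => ekey L R e1 ≤ ekey L R e2) := by
  haveI : IsTotal (Fin n × Bool) (fun e1 e2 => ekey L R e1 ≤ ekey L R e2) :=
    ⟨fun _ _ => le_total _ _⟩
  haveI : IsTrans (Fin n × Bool) (fun e1 e2 => ekey L R e1 ≤ ekey L R e2) :=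
    ⟨fun _ _ _ => le_trans⟩
  exact List.pairwise_insertionSort _ _

lemma mem_es (L R : Fin n → ℝ) (i : Fin n) (b : Bool) : (i, b) ∈ es L R := by
  rw [es, (List.perm_insertionSort _ _).mem_iff]
  simp only [List.mem_flatMap, List.mem_finRange, List.mem_cons, List.mem_singleton]
  exact ⟨i, by cases b <;> simp⟩

end Stmt15Aux

open Stmt15Aux in
/-- every co-interval graph is 12-representable. If the complement
of `G` is the intersection graph of closed real intervals `[L i, R i]`, then some
injective labeling of the vertices of `G` by `{1,…,n}` admits a 12-representing
word. -/
theorem stmt_15 (n : ℕ) (G : SimpleGraph (Fin n)) (L R : Fin n → ℝ)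
    (hLR : ∀ i, L i < R i)
    (hco : ∀ i j : Fin n, i ≠ j → (¬ G.Adj i j ↔ (L i ≤ R j ∧ L j ≤ R i))) :
    ∃ f : Fin n → ℕ, Function.Injective f ∧ (∀ i, f i ∈ Finset.Icc 1 n) ∧
      ∃ w, Rep12 (Finset.image f Finset.univ)
        (fun a b => ∃ i j : Fin n, a = f i ∧ b = f j ∧ G.Adj i j) w := by
  classical
  set f : Fin n → ℕ := lab L with hf
  have finj : Function.Injective f := lab_inj L
  refine ⟨f, finj, fun i => lab_mem L i, ?_⟩
  set w : List ℕ := (es L R).map (fun e => f e.1) with hw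
  refine ⟨w, ?_, ?_, ?_⟩
  · -- every vertex occurs in w
    intro v hv
    rw [Finset.mem_image] at hv
    obtain ⟨i, _, rfl⟩ := hv
    rw [hw, List.mem_map]
    exact ⟨(i, false), mem_es L R i false, rfl⟩
  · -- every letter of w is a vertex
    intro a ha
    rw [hw, List.mem_map] at ha
    obtain ⟨e, _, rfl⟩ := ha
    exact Finset.mem_image_of_mem f (Finset.mem_univ e.1)
  · -- the key equivalence
    have main : ∀ i j : Fin n, f i < f j →
        (G.Adj i j ↔ ¬ ([f i, f j]).Sublist w) := by
      intro i j hij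
      have hne : i ≠ j := fun h => by rw [h] at hij; exact lt_irrefl _ hij
      constructor
      · -- adjacency: intervals disjoint, hence all j-events precede all i-events
        intro hadj hsub
        have hdisj : ¬ (L i ≤ R j ∧ L j ≤ R i) := fun h => (hco i j hne).mpr h hadj
        have hRL : R j < L i := by
          by_cases hLi : L i ≤ R j
          · have hRiLj : R i < L j := by
              by_contra hc
              exact hdisj ⟨hLi, not_lt.mp hc⟩
            have hLL : L i < L j := lt_trans (hLR i) hRiLj
            have hk : key2 L j < key2 L i := by
              rw [key2, key2, Prod.Lex.lt_iff]
              left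
              exact neg_lt_neg hLL
            have := lab_lt hk
            simp only [← hf] at this
            omega
          · exact not_le.mp hLi
        rw [hw, List.sublist_map_iff] at hsub
        obtain ⟨l', hl', heq⟩ := hsub
        rcases l' with _ | ⟨e1, _ | ⟨e2, _ | ⟨e3, t⟩⟩⟩ <;> simp at heq
        obtain ⟨h1, h2⟩ := heq
        have he1 : e1.1 = i := (finj h1).symm
        have he2 : e2.1 = j := (finj h2).symm
        have hpw : List.Pairwise (fun a b => ekey L R a ≤ ekey L R b) (es L R) :=
          es_sorted L R
        have hrel : ekey L R e1 ≤ ekey L R e2 :=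
          (List.pairwise_cons.mp (hpw.sublist hl')).1 e2 (by simp)
        have h1b : (toLex ((L i : ℝ), (0 : ℕ)) : ℝ ×ₗ ℕ) ≤ ekey L R e1 := by
          obtain ⟨i1, b1⟩ := e1
          subst he1
          cases b1
          · exact le_refl _
          · rw [ekey, Prod.Lex.le_iff]
            left
            exact hLR _
        have h2b : ekey L R e2 ≤ (toLex ((R j : ℝ), (1 : ℕ)) : ℝ ×ₗ ℕ) := by
          obtain ⟨j1, b2⟩ := e2
          subst he2
          cases b2
          · rw [ekey, Prod.Lex.le_iff]
            left
            exact hLR _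
          · exact le_refl _
        have hchain : (toLex ((L i : ℝ), (0 : ℕ)) : ℝ ×ₗ ℕ) ≤ toLex ((R j : ℝ), (1 : ℕ)) :=
          (h1b.trans hrel).trans h2b
        rw [Prod.Lex.le_iff] at hchain
        rcases hchain with h | ⟨h, -⟩
        · exact absurd h (not_lt.mpr (le_of_lt hRL))
        · exact absurd h (ne_of_gt hRL)
      · -- no i-occurrence before a j-occurrence: intervals must be disjoint
        intro hnsub
        by_contra hnadj
        obtain ⟨hLiRj, -⟩ := (hco i j hne).mp hnadj
        have hlt : ekey L R (i, false) < ekey L R (j, true) := by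
          have ha : ekey L R (i, false) = toLex ((L i : ℝ), (0 : ℕ)) := by simp [ekey]
          have hb : ekey L R (j, true) = toLex ((R j : ℝ), (1 : ℕ)) := by simp [ekey]
          rw [ha, hb, Prod.Lex.lt_iff]
          rcases lt_or_eq_of_le hLiRj with h | h
          · exact Or.inl h
          · exact Or.inr ⟨h, Nat.zero_lt_one⟩
        have hsub : ([(i, false), (j, true)]).Sublist (es L R) :=
          pair_sublist_of_sorted (es_sorted L R) (mem_es L R i false)
            (mem_es L R j true) hlt
        exact hnsub (by simpa [hw] using hsub.map (fun e => f e.1))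
    have key : ∀ i j : Fin n, f i < f j →
        (G.Adj i j ↔ NoMatch12 (w.filter (fun a => a = f i ∨ a = f j))) := by
      intro i j hij
      have hfilt : ∀ c ∈ w.filter (fun a => decide (a = f i ∨ a = f j)),
          c = f i ∨ c = f j := by
        intro c hc
        rw [List.mem_filter] at hc
        exact of_decide_eq_true hc.2
      rw [main i j hij, NoMatch12, chain_iff_no_ab hij _ hfilt]
      refine not_congr ⟨fun h => ?_, fun h => h.trans List.filter_sublist⟩
      have := h.filter (fun a => decide (a = f i ∨ a = f j))
      simpa using this
    intro x hx y hy hxy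
    rw [Finset.mem_image] at hx hy
    obtain ⟨i, -, rfl⟩ := hx
    obtain ⟨j, -, rfl⟩ := hy
    have hE : (∃ i' j' : Fin n, f i = f i' ∧ f j = f j' ∧ G.Adj i' j') ↔ G.Adj i j := by
      constructor
      · rintro ⟨i', j', h1, h2, h3⟩
        rwa [finj h1, finj h2]
      · intro h
        exact ⟨i, j, rfl, rfl, h⟩
    rcases lt_or_gt_of_ne hxy with h | h
    · exact hE.trans (key i j h)
    · have hpred : (fun a => decide (a = f i ∨ a = f j)) =
          (fun a => decide (a = f j ∨ a = f i)) := by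
        funext a
        exact decide_eq_decide.mpr or_comm
      rw [show (w.filter (fun a => a = f i ∨ a = f j)) =
          (w.filter (fun a => a = f j ∨ a = f i)) from by rw [hpred]]
      exact hE.trans ((G.adj_comm i j).trans (key j i h))
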